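/- Let v₀, …, v_n be positive reals, u₁, …, u_n ∈ [0,1], and define the backward Metropolis runs A₀, …, A_n from them. Then A_k ≥ A_{k+1} for every 0 ≤ k < n. Equivalently, setting Ŷ_i := 1/A_{n−i} for 0 ≤ i ≤ n, the sequence Ŷ₀, Ŷ₁, …, Ŷ_n is nonincreasing: Ŷ_i ≤ Ŷ_{i−1} for all 1 ≤ i ≤ n. -/
import Mathlib


open MeasureTheory

/-- The Metropolis weight update: from current weight `w`, proposed weight `w'`, and
uniform draw `u`, accept the proposal iff `u ≤ min 1 (w'/w)`. -/
noncomputable def metroF (w w' u : ℝ) : ℝ := if u ≤ min 1 (w' / w) then w' else w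

/-- The chain started at index `k`, after `m` steps: `B k = v k`,
`B (k+m+1) = f (B (k+m)) (v (k+m+1)) (u (k+m+1))`. -/
noncomputable def backB (v u : ℕ → ℝ) (k : ℕ) : ℕ → ℝ
  | 0 => v k
  | m + 1 => metroF (backB v u k m) (v (k + m + 1)) (u (k + m + 1))

/-- The backward Metropolis run started at index `k ≤ n`: start at `v k` and apply the
Metropolis updates with proposals `v (k+1), …, v n` and draws `u (k+1), …, u n`; runs
started at different indices share the same pair `(v j, u j)` at each step `j`. -/
noncomputable def backA (v u : ℕ → ℝ) (n k : ℕ) : ℝ := backB v u k (n - k)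

lemma metroF_pos {w w' u : ℝ} (hw : 0 < w) (hw' : 0 < w') : 0 < metroF w w' u := by
  unfold metroF; split <;> assumption

lemma backB_pos (v u : ℕ → ℝ) (hv : ∀ i, 0 < v i) (k m : ℕ) : 0 < backB v u k m := by
  induction m with
  | zero => exact hv k
  | succ m ih => exact metroF_pos ih (hv _)

lemma metroF_mono {a b w' u : ℝ} (ha : 0 < a) (hab : a ≤ b) (hw' : 0 < w')
    (hu1 : u ≤ 1) : metroF a w' u ≤ metroF b w' u := by
  have hb : 0 < b := lt_of_lt_of_le ha hab
  unfold metroF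
  by_cases hbacc : u ≤ min 1 (w' / b)
  · have haacc : u ≤ min 1 (w' / a) :=
      le_trans hbacc (min_le_min le_rfl (div_le_div_of_nonneg_left hw'.le ha hab))
    simp [haacc, hbacc]
  · rw [if_neg hbacc]
    have hlt : min 1 (w' / b) < u := lt_of_not_ge hbacc
    have : w' / b < u := by
      rcases min_cases 1 (w' / b) with ⟨h1, h2⟩ | ⟨h1, h2⟩
      · rw [h1] at hlt; linarith
      · rwa [h1] at hlt
    have hwb : w' < b := by
      have := (div_lt_one hb).mp (lt_of_lt_of_le this hu1)
      exact this
    split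
    · exact hwb.le
    · exact hab

lemma metroF_ge {w w' u : ℝ} (hw : 0 < w) (hw' : 0 < w') (hu1 : u ≤ 1) : w' ≤ metroF w w' u := by
  unfold metroF
  split
  · exact le_rfl
  · next h =>
    have hlt : min 1 (w' / w) < u := lt_of_not_ge h
    rcases min_cases 1 (w' / w) with ⟨h1, h2⟩ | ⟨h1, h2⟩
    · rw [h1] at hlt; linarith
    · rw [h1] at hlt
      exact ((div_lt_one hw).mp (lt_of_lt_of_le hlt hu1)).le

lemma backB_step_le (v u : ℕ → ℝ) (hv : ∀ i, 0 < v i)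
    (hu : ∀ i, u i ∈ Set.Icc (0 : ℝ) 1) (k m : ℕ) :
    backB v u (k + 1) m ≤ backB v u k (m + 1) := by
  induction m with
  | zero =>
    show v (k + 1) ≤ metroF (v k) (v (k + 0 + 1)) (u (k + 0 + 1))
    simpa using metroF_ge (hv k) (hv (k + 1)) (hu (k + 1)).2
  | succ m ih =>
    show metroF (backB v u (k+1) m) (v (k + 1 + m + 1)) (u (k + 1 + m + 1)) ≤
      metroF (backB v u k (m+1)) (v (k + (m+1) + 1)) (u (k + (m+1) + 1))
    have he : k + 1 + m + 1 = k + (m + 1) + 1 := by ring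
    rw [he]
    exact metroF_mono (backB_pos v u hv _ _) ih (hv _) (hu _).2

/-- **Backward runs are monotone in the starting index.** `A k ≥ A (k+1)` for every
`0 ≤ k < n`; equivalently, the estimates `Ŷ i = 1 / A (n - i)` are nonincreasing in `i`. -/
theorem backward_runs_monotone
    (n : ℕ) (v u : ℕ → ℝ) (hv : ∀ i, 0 < v i)
    (hu : ∀ i, u i ∈ Set.Icc (0 : ℝ) 1) :
    (∀ k, k < n → backA v u n (k + 1) ≤ backA v u n k) ∧
    (∀ i, 1 ≤ i → i ≤ n →
      1 / backA v u n (n - i) ≤ 1 / backA v u n (n - (i - 1))) := by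
  have main : ∀ k, k < n → backA v u n (k + 1) ≤ backA v u n k := by
    intro k hk
    unfold backA
    have h1 : n - k = (n - (k + 1)) + 1 := by omega
    rw [h1]
    exact backB_step_le v u hv hu k (n - (k + 1))
  refine ⟨main, ?_⟩
  intro i hi1 hin
  have h2 : n - (i - 1) = (n - i) + 1 := by omega
  rw [h2]
  have hk : n - i < n := by omega
  have := main (n - i) hk
  exact one_div_le_one_div_of_le (by unfold backA; exact backB_pos v u hv _ _) this
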